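/- arXiv:1703.03143 — 5 statements merged into one kernel-verified Lean document; each statement's English description precedes it below -/
import Mathlib

section
/- Let G be a non-abelian group. Then the restricted direct power G^(∞) is not q-compact: there exists a system S of equations with constants from G^(∞) in two variables x, y whose solution set is contained in the solution set of [x, y] = 1, but no finite subsystem of S has its solution set contained in that of [x, y] = 1. -/
/-- Terms of the group language with constants from `G` and variables among `x_1,...,x_n`. -/
inductive GTerm (G : Type) (n : ℕ) where
  | var : Fin n → GTerm G n
  | const : G → GTerm G n
  | one : GTerm G n
  | mul : GTerm G n → GTerm G n → GTerm G n
  | inv : GTerm G n → GTerm G n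

def GTerm.eval {G : Type} [Group G] {n : ℕ} (v : Fin n → G) : GTerm G n → G
  | .var i => v i
  | .const g => g
  | .one => 1
  | .mul t s => t.eval v * s.eval v
  | .inv t => (t.eval v)⁻¹

def SolSet {G : Type} [Group G] {n : ℕ} (S : Set (GTerm G n × GTerm G n)) :
    Set (Fin n → G) :=
  {v | ∀ e ∈ S, e.1.eval v = e.2.eval v}

/-- The restricted direct power `G^(∞)`: the subgroup of the countable direct power
consisting of sequences with finite support. -/
def restrictedPower (G : Type) [Group G] : Subgroup (ℕ → G) where
  carrier := {f | {i | f i ≠ 1}.Finite}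
  one_mem' := by simp
  mul_mem' := by
    intro f g hf hg
    apply (Set.Finite.union hf hg).subset
    intro i hi
    by_contra h
    simp only [Set.mem_union, Set.mem_setOf_eq, not_or, not_not] at h
    exact hi (show (f * g) i = 1 by simp [h.1, h.2])
  inv_mem' := by
    intro f hf
    apply hf.subset
    intro i hi
    simp only [Set.mem_setOf_eq, Pi.inv_apply, ne_eq, inv_eq_one] at hi ⊢
    exact hi

/-- The equation `[x, y] = 1` in two variables. -/
def commEq (H : Type) [Group H] : GTerm H 2 × GTerm H 2 :=
  (.mul (.mul (.mul (.inv (.var 0)) (.inv (.var 1))) (.var 0)) (.var 1), .one)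

/-- For a non-abelian group `G`, the restricted direct power `G^(∞)` is not q-compact:
there is a system `S` of equations with constants, in two variables, whose solution set
is contained in that of `[x,y] = 1`, while no finite subsystem of `S` has its solution
set contained in that of `[x,y] = 1`. -/
theorem restricted_power_not_qcompact {G : Type} [Group G]
    (hna : ∃ a b : G, a * b ≠ b * a) :
    ∃ S : Set (GTerm (restrictedPower G) 2 × GTerm (restrictedPower G) 2),
      SolSet S ⊆ SolSet {commEq (restrictedPower G)} ∧
      ∀ S' ⊆ S, S'.Finite → ¬ (SolSet S' ⊆ SolSet {commEq (restrictedPower G)}) := by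
  classical
  obtain ⟨a, b, hab⟩ := hna
  set H := restrictedPower G with hH
  let f : H → GTerm H 2 × GTerm H 2 := fun c =>
    ((commEq H).1,
     .mul (.mul (.mul (.inv (.mul (.var 0) (.const c))) (.inv (.var 1)))
        (.mul (.var 0) (.const c))) (.var 1))
  refine ⟨Set.range f, ?_, ?_⟩
  · intro v hv e he
    simp only [Set.mem_singleton_iff] at he
    subst he
    have h := hv (f (v 0)⁻¹) ⟨(v 0)⁻¹, rfl⟩
    simp only [commEq, GTerm.eval, f] at h ⊢
    rw [h]
    group
  · intro S' hsub hfin hcon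
    have hfinj : Function.Injective f := by
      intro c d h
      simpa [f] using h
    have hT : (f ⁻¹' S').Finite := hfin.preimage hfinj.injOn
    have hK : (⋃ c ∈ f ⁻¹' S', {i | (c : ℕ → G) i ≠ 1}).Finite :=
      hT.biUnion (fun c _ => c.2)
    obtain ⟨m, hm⟩ := hK.infinite_compl.nonempty
    have hsupp : ∀ g : G, ({i | Pi.mulSingle (M := fun _ => G) m g i ≠ 1} : Set ℕ).Finite := by
      intro g
      apply (Set.finite_singleton m).subset
      intro i hi
      simp only [Set.mem_setOf_eq, ne_eq] at hi
      by_contra h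
      simp only [Set.mem_singleton_iff] at h
      exact hi (Pi.mulSingle_eq_of_ne (M := fun _ => G) h g)
    set x : H := ⟨Pi.mulSingle m a, hsupp a⟩ with hx
    set y : H := ⟨Pi.mulSingle m b, hsupp b⟩ with hy
    have hv' : ![x, y] ∈ SolSet S' := by
      intro e he
      obtain ⟨c, rfl⟩ := hsub he
      have hcmem : c ∈ f ⁻¹' S' := he
      have hcm : (c : ℕ → G) m = 1 := by
        by_contra h
        exact hm (Set.mem_biUnion hcmem h)
      apply Subtype.ext
      funext i
      simp only [commEq, GTerm.eval, f, Matrix.cons_val_zero, Matrix.cons_val_one,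
        Matrix.head_cons, Subgroup.coe_mul, InvMemClass.coe_inv, Pi.mul_apply, Pi.inv_apply,
        hx, hy]
      rcases eq_or_ne i m with rfl | hne
      · simp [hcm]
      · simp [Pi.mulSingle_eq_of_ne hne]
    have h2 := hcon hv' (commEq H) rfl
    have h3 := congrFun (congrArg Subtype.val h2) m
    simp only [commEq, GTerm.eval, Matrix.cons_val_zero, Matrix.cons_val_one,
      Matrix.head_cons, Subgroup.coe_mul, InvMemClass.coe_inv, Pi.mul_apply, Pi.inv_apply,
      OneMemClass.coe_one, Pi.one_apply, hx, hy, Pi.mulSingle_eq_same] at h3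
    apply hab
    have h4 : b * a * (a⁻¹ * b⁻¹ * a * b) = b * a := by rw [h3, mul_one]
    calc a * b = b * a * (a⁻¹ * b⁻¹ * a * b) := by group
      _ = b * a := h4
end

section
/- Let G be a non-abelian group. Then the full countable direct power G^∞ is not q-compact (with respect to equations with constants from G^∞). -/
/-- A group `H` is q-compact (w.r.t. equations with constants from `H`) if whenever the
solution set of a system is contained in that of a single equation, some finite
subsystem already suffices. -/
def QCompact (H : Type) [Group H] : Prop :=
  ∀ (n : ℕ) (S : Set (GTerm H n × GTerm H n)) (e : GTerm H n × GTerm H n),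
    SolSet S ⊆ SolSet {e} → ∃ S' ⊆ S, S'.Finite ∧ SolSet S' ⊆ SolSet {e}

/-- For a non-abelian group `G`, the full countable direct power `G^∞` is not
q-compact with respect to equations with constants from `G^∞`. -/
theorem full_power_not_qcompact {G : Type} [Group G]
    (hna : ∃ a b : G, a * b ≠ b * a) :
    ¬ QCompact (ℕ → G) := by
  obtain ⟨a, b, hab⟩ := hna
  have ha1 : a ≠ 1 := by rintro rfl; simp at hab
  intro hq
  let δ : ℕ → (ℕ → G) := fun n i => if i = n then a else 1
  let f : ℕ → GTerm (ℕ → G) 1 × GTerm (ℕ → G) 1 := fun n =>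
    (.mul (.var 0) (.const (δ n)), .mul (.const (δ n)) (.var 0))
  have hinj : Function.Injective f := by
    intro n m h
    have h1 : δ n = δ m := by
      have := congrArg Prod.fst h
      simp only [f, GTerm.mul.injEq, GTerm.const.injEq] at this
      exact this.2
    have := congrFun h1 n
    simp only [δ] at this
    by_contra hnm
    simp [hnm] at this
    exact ha1 this
  obtain ⟨S', hsub, hfin, hsol⟩ := hq 1 (Set.range f)
    (.mul (.var 0) (.const (fun _ => a)), .mul (.const (fun _ => a)) (.var 0))
    (by
      intro v hv
      intro e he
      simp only [Set.mem_singleton_iff] at he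
      subst he
      simp only [GTerm.eval]
      funext i
      have := hv (f i) ⟨i, rfl⟩
      have := congrFun this i
      simpa [f, GTerm.eval, δ, Pi.mul_apply] using this)
  have hNfin : (f ⁻¹' S').Finite := hfin.preimage hinj.injOn
  obtain ⟨m, hm⟩ := (hNfin.infinite_compl).nonempty
  set w : ℕ → G := fun i => if i = m then b else 1 with hw
  have hv : (fun _ : Fin 1 => w) ∈ SolSet S' := by
    intro p hp
    obtain ⟨n, rfl⟩ := hsub hp
    have hnm : n ≠ m := by
      rintro rfl
      exact hm hp
    simp only [f, GTerm.eval]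
    funext i
    simp only [Pi.mul_apply, hw, δ]
    by_cases him : i = m <;> by_cases hin : i = n <;>
      simp [him, hin, hnm] at * <;> simp_all
  have := hsol hv _ rfl
  simp only [GTerm.eval] at this
  have := congrFun this m
  simp [hw, Pi.mul_apply] at this
  exact hab this.symm
end

section
/- Let V be a variety of groups such that every group in V is equationally Noetherian (with respect to equations with constants). Then every group in V is abelian. -/
/-- A group is equationally Noetherian if every system of group equations with
constants, in finitely many variables, is equivalent to a finite subsystem. -/
def EquationallyNoetherian (G : Type) [Group G] : Prop :=
  ∀ (n : ℕ) (S : Set (GTerm G n × GTerm G n)),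
    ∃ S' ⊆ S, S'.Finite ∧ SolSet S' = SolSet S

/-- If `V` is a variety of groups (a class closed under subgroups, homomorphic images
and arbitrary direct products) all of whose members are equationally Noetherian (with
constants), then every group in `V` is abelian. -/
theorem variety_equationally_noetherian_abelian
    (V : (G : Type) → Group G → Prop)
    (hsub : ∀ (G : Type) [iG : Group G], V G iG → ∀ H : Subgroup G, V H inferInstance)
    (hquot : ∀ (G H : Type) [iG : Group G] [iH : Group H] (f : G →* H),
      Function.Surjective f → V G iG → V H iH)
    (hprod : ∀ (ι : Type) (G : ι → Type) [iG : ∀ i, Group (G i)],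
      (∀ i, V (G i) (iG i)) → V (∀ i, G i) inferInstance)
    (hN : ∀ (G : Type) [iG : Group G], V G iG → EquationallyNoetherian G) :
    ∀ (G : Type) [iG : Group G], V G iG → ∀ a b : G, a * b = b * a := by
  intro G iG hG a b
  by_contra h
  have ha1 : a ≠ 1 := by rintro rfl; simp at h
  classical
  have hP : V (ℕ → G) inferInstance := hprod ℕ (fun _ => G) (fun _ => hG)
  have hNP := hN (ℕ → G) hP
  set c : ℕ → (ℕ → G) := fun i j => if j = i then a else 1 with hc
  set eqn : ℕ → GTerm (ℕ → G) 1 × GTerm (ℕ → G) 1 := fun i =>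
    (.mul (.var 0) (.const (c i)), .mul (.const (c i)) (.var 0)) with heqn
  have hcinj : Function.Injective c := by
    intro i i' hii
    by_contra hne
    have h2 := congrFun hii i
    simp only [hc, if_pos rfl, if_neg hne] at h2
    exact ha1 h2
  have heinj : Function.Injective eqn := by
    intro i i' hii
    apply hcinj
    simpa [heqn, Prod.ext_iff, GTerm.mul.injEq, GTerm.const.injEq] using hii
  obtain ⟨S', hS'sub, hfin, hsol⟩ := hNP 1 (Set.range eqn)
  set I : Set ℕ := eqn ⁻¹' S' with hI
  have hIfin : I.Finite := hfin.preimage heinj.injOn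
  obtain ⟨i, hi⟩ := hIfin.infinite_compl.nonempty
  set v : Fin 1 → (ℕ → G) := fun _ j => if j ∈ I then 1 else b with hv
  have hv' : v ∈ SolSet S' := by
    intro e he
    obtain ⟨i₀, rfl⟩ := hS'sub he
    have hi₀ : i₀ ∈ I := he
    funext j
    by_cases hj : j = i₀
    · subst hj
      simp [heqn, GTerm.eval, hv, hc, hi₀]
    · simp [heqn, GTerm.eval, hv, hc, hj]
  have hvS : v ∈ SolSet (Set.range eqn) := hsol ▸ hv'
  have h3 := congrFun (hvS (eqn i) ⟨i, rfl⟩) i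
  have hiI : i ∉ I := hi
  simp [heqn, GTerm.eval, hv, hc, hiI] at h3
  exact h h3.symm
end

section
/- A variety V of groups has the property that every group in V is equationally Noetherian (with constants) if and only if V is a variety of abelian groups. -/
namespace AuxEqNoeth

variable {G : Type} [CommGroup G] {n : ℕ}

/-- Exponent vector of a term. -/
def exps : GTerm G n → (Fin n → ℤ)
  | .var i => Pi.single i 1
  | .const _ => 0
  | .one => 0
  | .mul t s => exps t + exps s
  | .inv t => -exps t

/-- Constant part of a term. -/
def cst : GTerm G n → G
  | .var _ => 1
  | .const g => g
  | .one => 1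
  | .mul t s => cst t * cst s
  | .inv t => (cst t)⁻¹

lemma eval_eq (t : GTerm G n) (v : Fin n → G) :
    t.eval v = (∏ i, v i ^ exps t i) * cst t := by
  induction t with
  | var i =>
      simp [GTerm.eval, exps, cst]
      rw [Finset.prod_eq_single i]
      · simp
      · intro j _ hj; simp [Pi.single_apply, hj]
      · simp
  | const g => simp [GTerm.eval, exps, cst]
  | one => simp [GTerm.eval, exps, cst]
  | mul t s ht hs =>
      simp only [GTerm.eval, exps, cst, ht, hs, Pi.add_apply, zpow_add,
        Finset.prod_mul_distrib]
      simp [mul_assoc, mul_comm, mul_left_comm]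
  | inv t ht =>
      simp only [GTerm.eval, exps, cst, ht, Pi.neg_apply, zpow_neg, mul_inv,
        Finset.prod_inv_distrib]

/-- The evaluation of exponent vectors, as a linear map. -/
def phiHom (v : Fin n → G) : (Fin n → ℤ) →ₗ[ℤ] Additive G :=
  AddMonoidHom.toIntLinearMap
  { toFun := fun μ => Additive.ofMul (∏ i, v i ^ μ i)
    map_zero' := by simp
    map_add' := fun μ ν => by
      simp only [Pi.add_apply, zpow_add, Finset.prod_mul_distrib]
      rfl }

lemma phiHom_apply (v : Fin n → G) (μ : Fin n → ℤ) :
    phiHom v μ = Additive.ofMul (∏ i, v i ^ μ i) := rfl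

/-- The linear-equation data of an equation. -/
def lin (e : GTerm G n × GTerm G n) : Fin n → ℤ := exps e.1 - exps e.2

def rhs (e : GTerm G n × GTerm G n) : Additive G :=
  Additive.ofMul (cst e.2 / cst e.1)

lemma eq_iff (e : GTerm G n × GTerm G n) (v : Fin n → G) :
    e.1.eval v = e.2.eval v ↔ phiHom v (lin e) = rhs e := by
  rw [eval_eq, eval_eq, lin, map_sub, phiHom_apply, phiHom_apply, rhs, ← ofMul_div,
    Additive.ofMul.apply_eq_iff_eq, div_eq_div_iff_mul_eq_mul, mul_comm (cst e.2)]

lemma mem_solSet_iff (S : Set (GTerm G n × GTerm G n)) (v : Fin n → G) :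
    v ∈ SolSet S ↔ ∀ e ∈ S, phiHom v (lin e) = rhs e := by
  constructor
  · intro h e he; exact (eq_iff e v).1 (h e he)
  · intro h e he; exact (eq_iff e v).2 (h e he)

/-- Every abelian group is equationally Noetherian. -/
theorem commGroup_eqNoeth (G : Type) [CommGroup G] : EquationallyNoetherian G := by
  intro n S
  classical
  -- the set of exponent vectors
  set T : Set (Fin n → ℤ) := lin '' S with hT
  -- find a finite subset of T with the same span
  have hfg : (Submodule.span ℤ T).FG := IsNoetherian.noetherian _
  obtain ⟨s, hs⟩ := hfg
  have hsub : ∀ x : Fin n → ℤ, ∃ F : Finset (Fin n → ℤ),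
      ↑F ⊆ T ∧ (x ∈ (s : Set (Fin n → ℤ)) → x ∈ Submodule.span ℤ (F : Set (Fin n → ℤ))) := by
    intro x
    by_cases hx : x ∈ (s : Set (Fin n → ℤ))
    · have : x ∈ Submodule.span ℤ T := by
        rw [← hs]; exact Submodule.subset_span hx
      obtain ⟨F, hF1, hF2⟩ := Submodule.mem_span_finite_of_mem_span this
      exact ⟨F, hF1, fun _ => hF2⟩
    · exact ⟨∅, by simp, fun h => absurd h hx⟩
  choose Tf hTf1 hTf3 using hsub
  set T' : Set (Fin n → ℤ) := ⋃ x ∈ (s : Set (Fin n → ℤ)), (Tf x : Set (Fin n → ℤ))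
    with hT'
  have hT'T : T' ⊆ T := by
    intro y hy
    simp only [hT', Set.mem_iUnion] at hy
    obtain ⟨x, _, hy⟩ := hy
    exact hTf1 x hy
  have hT'fin : T'.Finite :=
    Set.Finite.biUnion s.finite_toSet (fun x _ => (Tf x).finite_toSet)
  have hspan : Submodule.span ℤ T ≤ Submodule.span ℤ T' := by
    rw [← hs, Submodule.span_le]
    intro x hx
    exact Submodule.span_mono (Set.subset_biUnion_of_mem hx) (hTf3 x hx)
  -- pick for each exponent vector in T' an equation in S
  have hpick : ∀ x : Fin n → ℤ, ∃ e : GTerm G n × GTerm G n,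
      x ∈ T' → e ∈ S ∧ lin e = x := by
    intro x
    by_cases hx : x ∈ T'
    · obtain ⟨e, he, hle⟩ := hT'T hx
      exact ⟨e, fun _ => ⟨he, hle⟩⟩
    · exact ⟨(.one, .one), fun h => absurd h hx⟩
  choose pick hpick using hpick
  set E : Set (GTerm G n × GTerm G n) := ⋃ x ∈ T', {pick x} with hE
  have hES : E ⊆ S := by
    intro e he
    simp only [hE, Set.mem_iUnion, Set.mem_singleton_iff] at he
    obtain ⟨x, hx, rfl⟩ := he
    exact (hpick x hx).1
  have hEfin : E.Finite := Set.Finite.biUnion hT'fin (fun _ _ => Set.finite_singleton _)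
  -- key: phiHom is constant on SolSet E, on every lin e for e ∈ S
  have key : ∀ v ∈ SolSet E, ∀ w ∈ SolSet E, ∀ e ∈ S,
      phiHom v (lin e) = phiHom w (lin e) := by
    intro v hv w hw e he
    have hmem : lin e ∈ Submodule.span ℤ T' := by
      apply hspan
      exact Submodule.subset_span ⟨e, he, rfl⟩
    have hloc : Submodule.span ℤ T' ≤ LinearMap.eqLocus (phiHom v) (phiHom w) := by
      rw [Submodule.span_le]
      intro x hx
      have hex : pick x ∈ E := by
        simp only [hE, Set.mem_iUnion, Set.mem_singleton_iff]
        exact ⟨x, hx, rfl⟩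
      have h1 := (mem_solSet_iff E v).1 hv _ hex
      have h2 := (mem_solSet_iff E w).1 hw _ hex
      show phiHom v x = phiHom w x
      rw [← (hpick x hx).2, h1, h2]
    exact hloc hmem
  by_cases hcase : SolSet E ⊆ SolSet S
  · exact ⟨E, hES, hEfin, Set.Subset.antisymm hcase
      (fun v hv e he => hv e (hES he))⟩
  · rw [Set.not_subset] at hcase
    obtain ⟨v₀, hv₀E, hv₀S⟩ := hcase
    rw [mem_solSet_iff] at hv₀S
    push_neg at hv₀S
    obtain ⟨e₀, he₀S, he₀⟩ := hv₀S
    refine ⟨insert e₀ E, Set.insert_subset he₀S hES, hEfin.insert e₀, ?_⟩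
    have hempty : SolSet (insert e₀ E) = (∅ : Set (Fin n → G)) := by
      rw [Set.eq_empty_iff_forall_notMem]
      intro v hv
      have hvE : v ∈ SolSet E := fun e he => hv e (Set.mem_insert_of_mem _ he)
      have hve₀ : phiHom v (lin e₀) = rhs e₀ :=
        (eq_iff e₀ v).1 (hv e₀ (Set.mem_insert _ _))
      exact he₀ (by rw [key v₀ hv₀E v hvE e₀ he₀S]; exact hve₀)
    have hempty' : SolSet S = (∅ : Set (Fin n → G)) := by
      rw [Set.eq_empty_iff_forall_notMem]
      intro v hv
      have hvE : v ∈ SolSet E := fun e he => hv e (hES he)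
      have hve₀ : phiHom v (lin e₀) = rhs e₀ := (eq_iff e₀ v).1 (hv e₀ he₀S)
      exact he₀ (by rw [key v₀ hv₀E v hvE e₀ he₀S]; exact hve₀)
    rw [hempty, hempty']

end AuxEqNoeth

/-- A variety `V` of groups (a class closed under subgroups, homomorphic images and
arbitrary direct products) has all members equationally Noetherian (with constants)
iff all members are abelian. -/
theorem group_variety_noetherian_iff_abelian
    (V : (G : Type) → Group G → Prop)
    (hsub : ∀ (G : Type) [iG : Group G], V G iG → ∀ H : Subgroup G, V H inferInstance)
    (hquot : ∀ (G H : Type) [iG : Group G] [iH : Group H] (f : G →* H),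
      Function.Surjective f → V G iG → V H iH)
    (hprod : ∀ (ι : Type) (G : ι → Type) [iG : ∀ i, Group (G i)],
      (∀ i, V (G i) (iG i)) → V (∀ i, G i) inferInstance)
    :
    (∀ (G : Type) [iG : Group G], V G iG → EquationallyNoetherian G) ↔
    (∀ (G : Type) [iG : Group G], V G iG → ∀ a b : G, a * b = b * a) := by
  constructor
  · -- equationally Noetherian ⇒ abelian
    intro h G iG hG a b
    by_contra hne
    have ha1 : a ≠ 1 := by rintro rfl; simp at hne
    -- the countable power of G
    have hH : V (ℕ → G) inferInstance := hprod ℕ (fun _ => G) (fun _ => hG)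
    have hEN : EquationallyNoetherian (ℕ → G) := h _ hH
    classical
    -- the constants: a in coordinate i
    set c : ℕ → (ℕ → G) := fun i k => if k = i then a else 1 with hc
    have hcinj : Function.Injective c := by
      intro i j hij
      by_contra hne'
      have := congrFun hij i
      simp [hc, hne'] at this
      exact ha1 this
    set e : ℕ → (GTerm (ℕ → G) 1 × GTerm (ℕ → G) 1) :=
      fun i => (.mul (.var 0) (.const (c i)), .mul (.const (c i)) (.var 0)) with he
    have heinj : Function.Injective e := by
      intro i j hij
      apply hcinj
      have := congrArg Prod.fst hij
      simp only [he, GTerm.mul.injEq, GTerm.const.injEq] at this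
      exact this.2
    obtain ⟨S', hS'sub, hS'fin, hS'sol⟩ := hEN 1 (Set.range e)
    -- finitely many indices are used
    have hIfin : (e ⁻¹' S').Finite :=
      Set.Finite.preimage heinj.injOn hS'fin
    obtain ⟨j, hj⟩ := Set.Infinite.nonempty ((Set.infinite_univ (α := ℕ)).diff hIfin)
    have hjI : e j ∉ S' := fun h => hj.2 h
    -- the witness assignment
    set v₀ : Fin 1 → (ℕ → G) := fun _ k => if k = j then b else 1 with hv₀
    have hv₀S' : v₀ ∈ SolSet S' := by
      intro eq heq
      obtain ⟨i, rfl⟩ := hS'sub heq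
      have hij : i ≠ j := by rintro rfl; exact hjI heq
      show GTerm.eval v₀ _ = GTerm.eval v₀ _
      simp only [he, GTerm.eval]
      funext k
      simp only [Pi.mul_apply, hv₀, hc]
      by_cases hk : k = j
      · simp [hk, hij.symm]
      · simp [hk]
    have hv₀S : v₀ ∈ SolSet (Set.range e) := hS'sol ▸ hv₀S'
    have := hv₀S (e j) ⟨j, rfl⟩
    simp only [he, GTerm.eval] at this
    have := congrFun this j
    simp [hv₀, hc] at this
    exact hne this.symm
  · -- abelian ⇒ equationally Noetherian
    intro h G iG hG
    letI : CommGroup G := { iG with mul_comm := h G hG }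
    exact AuxEqNoeth.commGroup_eqNoeth G
end

section
/- Let W be the (restricted or unrestricted) wreath product G wr A of a non-abelian group G and an infinite group A. Then the restricted countable direct power G^(∞) embeds into W; consequently W is not equationally Noetherian. -/
section Wreath

variable (G A : Type) [Group G] [Group A]

/-- The shift automorphism of the base group `A → G`. -/
def shiftAut (a : A) : (A → G) ≃* (A → G) where
  toFun f := fun b => f (b * a)
  invFun f := fun b => f (b * a⁻¹)
  left_inv f := by funext b; simp [mul_assoc]
  right_inv f := by funext b; simp [mul_assoc]
  map_mul' f g := rfl

/-- The action of `A` on the base group `A → G` by permuting coordinates. -/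
def wreathAction : A →* MulAut (A → G) where
  toFun a := shiftAut G A a
  map_one' := by
    ext f b
    simp [shiftAut]
  map_mul' a b := by
    ext f c
    simp [shiftAut, MulAut.mul_def, mul_assoc]

/-- The unrestricted wreath product `G wr A`. -/
def WreathFull : Type := (A → G) ⋊[wreathAction G A] A

instance : Group (WreathFull G A) :=
  inferInstanceAs (Group ((A → G) ⋊[wreathAction G A] A))

/-- The finitely supported base subgroup `⨁_{a ∈ A} G` of `A → G`. -/
def resBase : Subgroup (A → G) where
  carrier := {f | {b | f b ≠ 1}.Finite}
  one_mem' := by simp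
  mul_mem' := by
    intro f g hf hg
    apply (Set.Finite.union hf hg).subset
    intro b hb
    by_contra h
    simp only [Set.mem_union, Set.mem_setOf_eq, not_or, not_not] at h
    exact hb (show (f * g) b = 1 by simp [h.1, h.2])
  inv_mem' := by
    intro f hf
    apply hf.subset
    intro b hb
    simp only [Set.mem_setOf_eq, Pi.inv_apply, ne_eq, inv_eq_one] at hb ⊢
    exact hb

/-- The shift automorphism of the restricted base group. -/
def shiftAutRes (a : A) : ↥(resBase G A) ≃* ↥(resBase G A) where
  toFun f := ⟨fun b => f.1 (b * a),
    Set.Finite.preimage ((mul_left_injective a).injOn) f.2⟩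
  invFun f := ⟨fun b => f.1 (b * a⁻¹),
    Set.Finite.preimage ((mul_left_injective a⁻¹).injOn) f.2⟩
  left_inv f := by
    apply Subtype.ext
    funext b
    simp [mul_assoc]
  right_inv f := by
    apply Subtype.ext
    funext b
    simp [mul_assoc]
  map_mul' f g := rfl

/-- The action of `A` on the restricted base group by permuting coordinates. -/
def wreathActionRes : A →* MulAut ↥(resBase G A) where
  toFun a := shiftAutRes G A a
  map_one' := by
    ext f b
    simp [shiftAutRes]
  map_mul' a b := by
    ext f c
    simp [shiftAutRes, MulAut.mul_def, mul_assoc]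

/-- The restricted wreath product `G wr A`. -/
def WreathRes : Type := ↥(resBase G A) ⋊[wreathActionRes G A] A

instance : Group (WreathRes G A) :=
  inferInstanceAs (Group (↥(resBase G A) ⋊[wreathActionRes G A] A))

end Wreath

namespace GTerm

/-- Apply a map to the constants of a term. -/
def mapC {G H : Type} {n : ℕ} (φ : G → H) : GTerm G n → GTerm H n
  | .var i => .var i
  | .const g => .const (φ g)
  | .one => .one
  | .mul t s => .mul (mapC φ t) (mapC φ s)
  | .inv t => .inv (mapC φ t)

lemma eval_mapC {G H : Type} [Group G] [Group H] {n : ℕ} (φ : G →* H) (v : Fin n → G) :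
    ∀ t : GTerm G n, (t.mapC φ).eval (fun i => φ (v i)) = φ (t.eval v)
  | .var i => rfl
  | .const g => rfl
  | .one => (map_one φ).symm
  | .mul t s => by
      simp only [mapC, eval, eval_mapC φ v t, eval_mapC φ v s, map_mul]
  | .inv t => by
      simp only [mapC, eval, eval_mapC φ v t, map_inv]

end GTerm

lemma EquationallyNoetherian.of_injective {G H : Type} [Group G] [Group H]
    (φ : G →* H) (hφ : Function.Injective φ) (hH : EquationallyNoetherian H) :
    EquationallyNoetherian G := by
  intro n S
  let F : GTerm G n × GTerm G n → GTerm H n × GTerm H n :=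
    fun e => (e.1.mapC φ, e.2.mapC φ)
  obtain ⟨S', hsub, hfin, hsol⟩ :=
    (Set.exists_subset_image_finite_and (f := F) (s := S)
      (p := fun t => SolSet t = SolSet (F '' S))).mp (hH n (F '' S))
  refine ⟨S', hsub, hfin, ?_⟩
  apply Set.Subset.antisymm
  · intro v hv e heS
    have hvH : (fun i => φ (v i)) ∈ SolSet (F '' S') := by
      rintro t ⟨e', he', rfl⟩
      show (GTerm.mapC φ e'.1).eval _ = (GTerm.mapC φ e'.2).eval _
      rw [GTerm.eval_mapC, GTerm.eval_mapC, hv e' he']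
    have := hsol ▸ hvH
    have h2 := this (F e) ⟨e, heS, rfl⟩
    apply hφ
    have := h2
    rwa [show (F e).1 = e.1.mapC φ from rfl, show (F e).2 = e.2.mapC φ from rfl,
      GTerm.eval_mapC, GTerm.eval_mapC] at this
  · intro v hv e heS'
    exact hv e (hsub heS')

/-- A delta function at `m` with value `g`. -/
def deltaFn {G : Type} [Group G] (m : ℕ) (g : G) : ℕ → G := fun i => if i = m then g else 1

lemma deltaFn_mem {G : Type} [Group G] (m : ℕ) (g : G) : deltaFn m g ∈ restrictedPower G := by
  apply Set.Finite.subset (Set.finite_singleton m)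
  intro i hi
  simp only [Set.mem_setOf_eq, deltaFn] at hi
  by_contra h
  simp only [Set.mem_singleton_iff] at h
  exact hi (if_neg h)

lemma restrictedPower_not_EN {G : Type} [Group G] (hna : ∃ a b : G, a * b ≠ b * a) :
    ¬ EquationallyNoetherian ↥(restrictedPower G) := by
  obtain ⟨a, b, hab⟩ := hna
  have hb : b ≠ 1 := by rintro rfl; simp at hab
  intro hEN
  let c : ℕ → ↥(restrictedPower G) := fun m => ⟨deltaFn m b, deltaFn_mem m b⟩
  have hc : Function.Injective c := by
    intro m n h
    by_contra hmn
    have := congrFun (congrArg Subtype.val h) m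
    simp only [c, deltaFn, if_pos rfl, if_neg hmn] at this
    exact hb this
  let E : ℕ → GTerm ↥(restrictedPower G) 1 × GTerm ↥(restrictedPower G) 1 :=
    fun m => (.mul (.var 0) (.const (c m)), .mul (.const (c m)) (.var 0))
  have hE : Function.Injective E := by
    intro m n h
    apply hc
    have := congrArg Prod.fst h
    simp only [E, GTerm.mul.injEq, GTerm.const.injEq] at this
    exact this.2
  obtain ⟨S', hsub, hfin, hsol⟩ := hEN 1 (Set.range E)
  have hNfin : (E ⁻¹' S').Finite := hfin.preimage hE.injOn
  obtain ⟨m, hm⟩ := hNfin.infinite_compl.nonempty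
  simp only [Set.mem_compl_iff, Set.mem_preimage] at hm
  let v : Fin 1 → ↥(restrictedPower G) := fun _ => ⟨deltaFn m a, deltaFn_mem m a⟩
  have hvS' : v ∈ SolSet S' := by
    intro e he
    obtain ⟨n, rfl⟩ := hsub he
    have hnm : n ≠ m := by rintro rfl; exact hm he
    show GTerm.eval v (.mul (.var 0) (.const (c n))) = GTerm.eval v (.mul (.const (c n)) (.var 0))
    simp only [GTerm.eval]
    apply Subtype.ext
    funext i
    show deltaFn m a i * deltaFn n b i = deltaFn n b i * deltaFn m a i
    unfold deltaFn
    by_cases h1 : i = m <;> by_cases h2 : i = n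
    · exact absurd (h1.symm.trans h2) (Ne.symm hnm)
    all_goals simp [h1, h2, hnm, Ne.symm hnm]
  have hvS : v ∈ SolSet (Set.range E) := hsol ▸ hvS'
  have := hvS (E m) ⟨m, rfl⟩
  simp only [E, GTerm.eval] at this
  have h2 := congrFun (congrArg Subtype.val this) m
  show False
  have : deltaFn m a m * deltaFn m b m = deltaFn m b m * deltaFn m a m := h2
  simp only [deltaFn, if_pos rfl] at this
  exact hab this

section Embed

variable (G A : Type) [Group G] [Group A] [Infinite A]

/-- Extension along the natural embedding `ℕ ↪ A` as a monoid hom. -/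
noncomputable def extHom : (ℕ → G) →* (A → G) where
  toFun f := Function.extend (Infinite.natEmbedding A) f (fun _ => 1)
  map_one' := by
    funext x
    by_cases h : ∃ n, Infinite.natEmbedding A n = x
    · obtain ⟨n, rfl⟩ := h
      simp [(Infinite.natEmbedding A).injective.extend_apply]
    · simp [Function.extend_apply' _ _ _ h]
  map_mul' f g := by
    funext x
    by_cases h : ∃ n, Infinite.natEmbedding A n = x
    · obtain ⟨n, rfl⟩ := h
      simp [(Infinite.natEmbedding A).injective.extend_apply]
    · simp [Function.extend_apply' _ _ _ h]

lemma extHom_injective : Function.Injective (extHom G A) := by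
  intro f g h
  funext n
  have := congrFun h (Infinite.natEmbedding A n)
  simpa [extHom, (Infinite.natEmbedding A).injective.extend_apply] using this

lemma extHom_mem_resBase (f : ↥(restrictedPower G)) :
    extHom G A f.1 ∈ resBase G A := by
  apply Set.Finite.subset (f.2.image (Infinite.natEmbedding A))
  intro x hx
  simp only [Set.mem_setOf_eq, extHom, MonoidHom.coe_mk, OneHom.coe_mk] at hx
  by_cases h : ∃ n, Infinite.natEmbedding A n = x
  · obtain ⟨n, rfl⟩ := h
    refine ⟨n, ?_, rfl⟩
    simpa [extHom, (Infinite.natEmbedding A).injective.extend_apply] using hx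
  · exact absurd (Function.extend_apply' _ _ _ h) hx

/-- The embedding of `G^(∞)` into the restricted wreath product. -/
noncomputable def embedRes : ↥(restrictedPower G) →* WreathRes G A :=
  (SemidirectProduct.inl : ↥(resBase G A) →* ↥(resBase G A) ⋊[wreathActionRes G A] A).comp
    (MonoidHom.codRestrict ((extHom G A).comp (restrictedPower G).subtype) (resBase G A)
      (extHom_mem_resBase G A))

lemma embedRes_injective : Function.Injective (embedRes G A) := by
  apply Function.Injective.comp (g := (SemidirectProduct.inl :
      ↥(resBase G A) →* ↥(resBase G A) ⋊[wreathActionRes G A] A))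
  · exact SemidirectProduct.inl_injective
  · intro f g h
    have : extHom G A f.1 = extHom G A g.1 := congrArg Subtype.val h
    exact Subtype.ext (extHom_injective G A this)

/-- The embedding of `G^(∞)` into the full wreath product. -/
noncomputable def embedFull : ↥(restrictedPower G) →* WreathFull G A :=
  (SemidirectProduct.inl : (A → G) →* (A → G) ⋊[wreathAction G A] A).comp
    ((extHom G A).comp (restrictedPower G).subtype)

lemma embedFull_injective : Function.Injective (embedFull G A) := by
  apply Function.Injective.comp (g := (SemidirectProduct.inl :
      (A → G) →* (A → G) ⋊[wreathAction G A] A))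
  · exact SemidirectProduct.inl_injective
  · exact (extHom_injective G A).comp Subtype.val_injective

end Embed

/-- Let `W = G wr A` be the restricted or unrestricted wreath product of a non-abelian
group `G` and an infinite group `A`. Then the restricted countable direct power
`G^(∞)` embeds into `W`; consequently `W` is not equationally Noetherian. -/
theorem wreath_product_not_equationally_noetherian
    (G A : Type) [Group G] [Group A]
    (hna : ∃ a b : G, a * b ≠ b * a) (hinf : Infinite A) :
    ((∃ φ : ↥(restrictedPower G) →* WreathRes G A, Function.Injective φ) ∧
      ¬ EquationallyNoetherian (WreathRes G A)) ∧
    ((∃ φ : ↥(restrictedPower G) →* WreathFull G A, Function.Injective φ) ∧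
      ¬ EquationallyNoetherian (WreathFull G A)) := by
  haveI := hinf
  refine ⟨⟨⟨embedRes G A, embedRes_injective G A⟩, ?_⟩,
         ⟨⟨embedFull G A, embedFull_injective G A⟩, ?_⟩⟩
  · intro h
    exact restrictedPower_not_EN hna
      (EquationallyNoetherian.of_injective (embedRes G A) (embedRes_injective G A) h)
  · intro h
    exact restrictedPower_not_EN hna
      (EquationallyNoetherian.of_injective (embedFull G A) (embedFull_injective G A) h)
end
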